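/- arXiv:1701.06321 — 3 statements merged into one kernel-verified Lean document; each statement's English description precedes it below -/
import Mathlib

section
/- Let λ₁ ≥ λ₂ ≥ ⋯ ≥ λ_n ≥ 0 be real numbers and let ℓ = ⌈√n⌉ + 1 ≤ n. Then (∑_{i=1}^{ℓ} λ_i)² ≥ ∑_{i=1}^{n} λ_i². -/
open Matrix

/-- For λ₁ ≥ ⋯ ≥ λ_n ≥ 0 and ℓ = ⌈√n⌉ + 1 ≤ n we have
(∑_{i=1}^{ℓ} λ_i)² ≥ ∑_{i=1}^{n} λ_i². -/
theorem stmt4 (n : ℕ) (f : ℕ → ℝ)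
    (hmono : ∀ i j : ℕ, i ≤ j → j < n → f j ≤ f i)
    (hnonneg : ∀ i : ℕ, i < n → 0 ≤ f i)
    (ℓ : ℕ) (hℓ : ℓ = ⌈Real.sqrt n⌉₊ + 1) (hle : ℓ ≤ n) :
    ∑ i ∈ Finset.range n, (f i) ^ 2 ≤ (∑ i ∈ Finset.range ℓ, f i) ^ 2 := by
  have hℓ1 : 1 ≤ ℓ := by omega
  set c : ℝ := f (ℓ - 1) with hc
  set S : ℝ := ∑ i ∈ Finset.range ℓ, f i with hS
  have hc0 : 0 ≤ c := hnonneg _ (by omega)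
  have hfc : ∀ i ∈ Finset.range ℓ, c ≤ f i := by
    intro i hi
    simp only [Finset.mem_range] at hi
    exact hmono i (ℓ - 1) (by omega) (by omega)
  -- L² ≥ n
  have hL2 : (n : ℝ) ≤ (ℓ : ℝ) * (ℓ : ℝ) := by
    have h1 : Real.sqrt n ≤ (⌈Real.sqrt n⌉₊ : ℝ) := Nat.le_ceil _
    have h2 : Real.sqrt n ≤ (ℓ : ℝ) := by
      rw [hℓ]; push_cast; linarith
    have h3 : Real.sqrt n * Real.sqrt n = (n : ℝ) :=
      Real.mul_self_sqrt (by positivity)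
    nlinarith [Real.sqrt_nonneg (n : ℝ)]
  -- S ≥ ℓ c
  have hSc : (ℓ : ℝ) * c ≤ S := by
    have := Finset.card_nsmul_le_sum (Finset.range ℓ) f c hfc
    simpa [nsmul_eq_mul] using this
  have hS0 : 0 ≤ S := le_trans (by positivity) hSc
  -- each f i ≤ S - (ℓ-1) c for i < ℓ
  have hfi : ∀ i ∈ Finset.range ℓ, f i ≤ S - ((ℓ : ℝ) - 1) * c := by
    intro i hi
    have hrest : ((ℓ : ℝ) - 1) * c ≤ ∑ j ∈ (Finset.range ℓ).erase i, f j := by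
      have hcard : ((Finset.range ℓ).erase i).card = ℓ - 1 := by
        rw [Finset.card_erase_of_mem hi, Finset.card_range]
      have := Finset.card_nsmul_le_sum ((Finset.range ℓ).erase i) f c
        (fun j hj => hfc j (Finset.mem_of_mem_erase hj))
      rw [hcard] at this
      have hcast : ((ℓ - 1 : ℕ) : ℝ) = (ℓ : ℝ) - 1 := by
        push_cast [hℓ1]; ring
      simpa [nsmul_eq_mul, hcast] using this
    have hsum : S = f i + ∑ j ∈ (Finset.range ℓ).erase i, f j := by
      rw [hS, ← Finset.add_sum_erase _ f hi]
    linarith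
  -- head bound
  have hhead : ∑ i ∈ Finset.range ℓ, (f i) ^ 2 ≤ (S - ((ℓ : ℝ) - 1) * c) * S := by
    calc ∑ i ∈ Finset.range ℓ, (f i) ^ 2
        ≤ ∑ i ∈ Finset.range ℓ, (S - ((ℓ : ℝ) - 1) * c) * f i := by
          apply Finset.sum_le_sum
          intro i hi
          have hnn : 0 ≤ f i := le_trans hc0 (hfc i hi)
          have := hfi i hi
          nlinarith
      _ = (S - ((ℓ : ℝ) - 1) * c) * S := by rw [← Finset.mul_sum]
  -- tail bound
  have htail : ∑ i ∈ Finset.Ico ℓ n, (f i) ^ 2 ≤ ((n : ℝ) - ℓ) * c ^ 2 := by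
    have hb : ∀ i ∈ Finset.Ico ℓ n, (f i) ^ 2 ≤ c ^ 2 := by
      intro i hi
      simp only [Finset.mem_Ico] at hi
      have h1 : f i ≤ c := hmono (ℓ - 1) i (by omega) hi.2
      have h2 : 0 ≤ f i := hnonneg i hi.2
      nlinarith
    have := Finset.sum_le_card_nsmul (Finset.Ico ℓ n) (fun i => (f i) ^ 2) (c ^ 2) hb
    rw [Nat.card_Ico] at this
    have hcast : ((n - ℓ : ℕ) : ℝ) = (n : ℝ) - ℓ := by
      push_cast [hle]; ring
    simpa [nsmul_eq_mul, hcast] using this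
  have hsplit : ∑ i ∈ Finset.range n, (f i) ^ 2
      = ∑ i ∈ Finset.range ℓ, (f i) ^ 2 + ∑ i ∈ Finset.Ico ℓ n, (f i) ^ 2 := by
    rw [← Finset.sum_range_add_sum_Ico _ hle]
  rw [hsplit]
  have hL1 : (1 : ℝ) ≤ (ℓ : ℝ) := by exact_mod_cast hℓ1
  nlinarith [mul_nonneg hc0 hS0, sq_nonneg c, mul_le_mul_of_nonneg_left hSc (mul_nonneg (by linarith : (0:ℝ) ≤ (ℓ:ℝ) - 1) hc0)]
end

section
/- Let A be a real symmetric positive semidefinite n×n matrix with eigenvalues λ₁ ≥ ⋯ ≥ λ_n, and let S be the span of the eigenvectors corresponding to the top ℓ = ⌈√n⌉ + 1 eigenvalues. Then tr(Π_S A) ≥ ‖A‖_F, where Π_S is the orthogonal projection onto S. -/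
open Matrix

noncomputable def frob {m n : Type*} [Fintype m] [Fintype n] (A : Matrix m n ℝ) : ℝ :=
  Real.sqrt (∑ i, ∑ j, (A i j) ^ 2)

lemma tr_vv {n : ℕ} (a b c d : Fin n → ℝ) :
    Matrix.trace (vecMulVec a b * vecMulVec c d) = (b ⬝ᵥ c) * (d ⬝ᵥ a) := by
  simp only [Matrix.trace, Matrix.diag, Matrix.mul_apply, vecMulVec_apply, dotProduct]
  rw [Finset.sum_mul_sum, Finset.sum_comm]
  congr 1; ext i; congr 1; ext j; ring

/-- If A is real symmetric PSD with eigenvalues λ₁ ≥ ⋯ ≥ λ_n, eigenvectors v_i,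
and Π_S is the projection onto the span of the top ℓ = ⌈√n⌉+1 eigenvectors,
then tr(Π_S A) ≥ ‖A‖_F. -/
theorem stmt5 (n : ℕ) (A : Matrix (Fin n) (Fin n) ℝ)
    (lam : Fin n → ℝ) (v : Fin n → (Fin n → ℝ))
    (horth : ∀ i j : Fin n, v i ⬝ᵥ v j = if i = j then 1 else 0)
    (hmono : ∀ i j : Fin n, i ≤ j → lam j ≤ lam i)
    (hnonneg : ∀ i : Fin n, 0 ≤ lam i)
    (hA : A = ∑ i, lam i • Matrix.vecMulVec (v i) (v i))
    (ℓ : ℕ) (hℓ : ℓ = ⌈Real.sqrt n⌉₊ + 1) (hle : ℓ ≤ n)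
    (P : Matrix (Fin n) (Fin n) ℝ)
    (hP : P = ∑ i ∈ Finset.univ.filter (fun i : Fin n => (i : ℕ) < ℓ),
        Matrix.vecMulVec (v i) (v i)) :
    frob A ≤ Matrix.trace (P * A) := by
  set T := Finset.univ.filter (fun i : Fin n => (i : ℕ) < ℓ) with hT
  have hℓpos : 1 ≤ ℓ := by omega
  -- trace computation
  have htr : Matrix.trace (P * A) = ∑ k ∈ T, lam k := by
    rw [hP, hA, Finset.sum_mul, Matrix.trace_sum]
    refine Finset.sum_congr rfl fun k _ => ?_
    rw [Finset.mul_sum, Matrix.trace_sum]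
    simp only [Matrix.mul_smul, Matrix.trace_smul, tr_vv, horth, smul_eq_mul]
    rw [Finset.sum_eq_single k]
    · simp
    · intro l _ hl; simp [hl, Ne.symm hl]
    · simp
  -- frobenius computation
  have hAsymm : Aᵀ = A := by
    rw [hA, Matrix.transpose_sum]
    refine Finset.sum_congr rfl fun k _ => ?_
    rw [Matrix.transpose_smul]
    congr 1
    ext i j
    simp [vecMulVec_apply, mul_comm]
  have hF : ∑ i, ∑ j, (A i j) ^ 2 = ∑ k, lam k ^ 2 := by
    have h1 : ∑ i, ∑ j, (A i j) ^ 2 = Matrix.trace (A * Aᵀ) := by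
      simp only [Matrix.trace, Matrix.diag, Matrix.mul_apply, Matrix.transpose_apply, sq]
    rw [h1, hAsymm]
    nth_rewrite 1 [hA]
    nth_rewrite 1 [hA]
    rw [Finset.sum_mul, Matrix.trace_sum]
    refine Finset.sum_congr rfl fun k _ => ?_
    rw [Finset.mul_sum, Matrix.trace_sum]
    simp only [Matrix.smul_mul, Matrix.mul_smul, Matrix.trace_smul, tr_vv, horth, smul_eq_mul]
    rw [Finset.sum_eq_single k]
    · simp [sq]
    · intro l _ hl; simp [hl, Ne.symm hl]
    · simp
  -- arithmetic
  set s := ∑ k ∈ T, lam k with hs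
  have hcard : T.card = ℓ := by
    rw [← Finset.card_range ℓ]
    apply Finset.card_bij (fun (i : Fin n) _ => (i : ℕ))
    · intro a ha; simp only [hT, Finset.mem_filter] at ha; simpa using ha.2
    · intro a _ b _ h; exact Fin.val_injective h
    · intro b hb
      simp only [Finset.mem_range] at hb
      exact ⟨⟨b, lt_of_lt_of_le hb hle⟩, by simp [hT, hb], rfl⟩
  set μ := lam ⟨ℓ - 1, by omega⟩ with hμ
  have hμ0 : 0 ≤ μ := hnonneg _
  have hlamT : ∀ i ∈ T, μ ≤ lam i := by
    intro i hi
    simp only [hT, Finset.mem_filter] at hi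
    exact hmono i ⟨ℓ - 1, by omega⟩ (by simp [Fin.le_def]; omega)
  have hlamTc : ∀ i : Fin n, ¬ ((i : ℕ) < ℓ) → lam i ≤ μ := by
    intro i hi
    exact hmono ⟨ℓ - 1, by omega⟩ i (by simp [Fin.le_def]; omega)
  have hs0 : 0 ≤ s := Finset.sum_nonneg fun i _ => hnonneg i
  have hnl : (n : ℝ) ≤ (ℓ : ℝ) * ((ℓ : ℝ) - 1) := by
    have h1 : Real.sqrt n ≤ (⌈Real.sqrt n⌉₊ : ℝ) := Nat.le_ceil _
    have h2 : (n : ℝ) = Real.sqrt n ^ 2 := (Real.sq_sqrt (by positivity)).symm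
    have h3 : (ℓ : ℝ) = (⌈Real.sqrt n⌉₊ : ℝ) + 1 := by rw [hℓ]; push_cast; ring
    nlinarith [Real.sqrt_nonneg (n : ℝ)]
  -- key inequality : sum of squares ≤ s^2
  have hkey : ∑ k, lam k ^ 2 ≤ s ^ 2 := by
    have hsplit : ∑ k, lam k ^ 2
        = ∑ k ∈ T, lam k ^ 2 + ∑ k ∈ Finset.univ.filter (fun i : Fin n => ¬ ((i : ℕ) < ℓ)), lam k ^ 2 := by
      rw [hT, Finset.sum_filter_add_sum_filter_not]
    have htail : ∑ k ∈ Finset.univ.filter (fun i : Fin n => ¬ ((i : ℕ) < ℓ)), lam k ^ 2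
        ≤ (n : ℝ) * μ ^ 2 := by
      calc ∑ k ∈ Finset.univ.filter (fun i : Fin n => ¬ ((i : ℕ) < ℓ)), lam k ^ 2
          ≤ ∑ _k ∈ Finset.univ.filter (fun i : Fin n => ¬ ((i : ℕ) < ℓ)), μ ^ 2 := by
            refine Finset.sum_le_sum fun i hi => ?_
            simp only [Finset.mem_filter] at hi
            exact pow_le_pow_left₀ (hnonneg i) (hlamTc i hi.2) 2
        _ = ((Finset.univ.filter (fun i : Fin n => ¬ ((i : ℕ) < ℓ))).card : ℝ) * μ ^ 2 := by
            rw [Finset.sum_const, nsmul_eq_mul]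
        _ ≤ (n : ℝ) * μ ^ 2 := by
            refine mul_le_mul_of_nonneg_right ?_ (by positivity)
            have := Finset.card_filter_le (Finset.univ : Finset (Fin n))
              (fun i : Fin n => ¬ ((i : ℕ) < ℓ))
            exact_mod_cast le_trans (Nat.cast_le.mpr this) (by simp)
    have hhead : ∑ k ∈ T, lam k ^ 2 + (ℓ : ℝ) * (((ℓ : ℝ) - 1) * μ ^ 2) ≤ s ^ 2 := by
      have hterm : ∀ i ∈ T, lam i ^ 2 + ((ℓ : ℝ) - 1) * μ ^ 2 ≤ lam i * s := by
        intro i hi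
        have h1 : ((ℓ : ℝ) - 1) * μ ≤ s - lam i := by
          have he : ∑ k ∈ T.erase i, lam k = s - lam i := Finset.sum_erase_eq_sub hi
          have hc : (T.erase i).card = ℓ - 1 := by rw [Finset.card_erase_of_mem hi, hcard]
          have h4 := Finset.card_nsmul_le_sum (T.erase i) lam μ
            (fun j hj => hlamT j (Finset.mem_of_mem_erase hj))
          rw [hc, he, nsmul_eq_mul] at h4
          have h5 : ((ℓ - 1 : ℕ) : ℝ) = (ℓ : ℝ) - 1 := by
            push_cast [Nat.cast_sub hℓpos]; ring
          rw [h5] at h4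
          exact h4
        have h2 : μ ≤ lam i := hlamT i hi
        have h3 : ((ℓ : ℝ) - 1) * μ ≥ 0 := by
          have hl1 : (1 : ℝ) ≤ ℓ := by exact_mod_cast hℓpos
          exact mul_nonneg (by linarith) hμ0
        nlinarith
      calc ∑ k ∈ T, lam k ^ 2 + (ℓ : ℝ) * (((ℓ : ℝ) - 1) * μ ^ 2)
          = ∑ k ∈ T, (lam k ^ 2 + ((ℓ : ℝ) - 1) * μ ^ 2) := by
            rw [Finset.sum_add_distrib, Finset.sum_const, hcard, nsmul_eq_mul]
        _ ≤ ∑ k ∈ T, lam k * s := Finset.sum_le_sum hterm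
        _ = s ^ 2 := by rw [← Finset.sum_mul, ← hs, sq]
    have hμn : (n : ℝ) * μ ^ 2 ≤ (ℓ : ℝ) * (((ℓ : ℝ) - 1) * μ ^ 2) := by
      have : (n : ℝ) * μ ^ 2 ≤ ((ℓ : ℝ) * ((ℓ : ℝ) - 1)) * μ ^ 2 :=
        mul_le_mul_of_nonneg_right hnl (by positivity)
      linarith [this]
    linarith
  rw [htr, frob, hF]
  calc Real.sqrt (∑ k, lam k ^ 2) ≤ Real.sqrt (s ^ 2) := Real.sqrt_le_sqrt hkey
    _ = s := by rw [Real.sqrt_sq hs0]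
end

section
/- Let μ be a finitely supported probability distribution over ℝⁿ with mean m = 𝔼_μ x, and suppose ε‖m‖² < ‖𝔼_μ xxᵀ − mmᵀ‖_F. Then there exists a subspace S of dimension at most ⌈√n⌉ + 2 such that 𝔼_μ ‖Π_S x‖² ≥ (1 + ε)‖m‖². -/
open Matrix

private lemma dotProduct_sum' {n : ℕ} {ι : Type*} (s : Finset ι) (u : Fin n → ℝ)
    (f : ι → Fin n → ℝ) : u ⬝ᵥ (∑ a ∈ s, f a) = ∑ a ∈ s, u ⬝ᵥ f a := by
  simp only [dotProduct, Finset.sum_apply, Finset.mul_sum]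
  exact Finset.sum_comm

private lemma sum_mulVec' {n : ℕ} {ι : Type*} (s : Finset ι) (M : ι → Matrix (Fin n) (Fin n) ℝ)
    (u : Fin n → ℝ) : (∑ a ∈ s, M a) *ᵥ u = ∑ a ∈ s, M a *ᵥ u := by
  ext i
  simp only [Matrix.mulVec, dotProduct, Finset.sum_apply, Matrix.sum_apply, Finset.sum_mul]
  exact Finset.sum_comm

private lemma vecMulVec_mulVec' {n : ℕ} (a b u : Fin n → ℝ) :
    Matrix.vecMulVec a b *ᵥ u = (b ⬝ᵥ u) • a := by
  ext i
  simp only [Matrix.mulVec, dotProduct, Matrix.vecMulVec_apply, Pi.smul_apply, smul_eq_mul,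
    Finset.sum_mul]
  exact Finset.sum_congr rfl fun j _ => by ring

private lemma dot_sum_ortho {n : ℕ} {ι : Type*} [DecidableEq ι] (s : Finset ι)
    (u : ι → Fin n → ℝ)
    (horth : ∀ a ∈ s, ∀ b ∈ s, u a ⬝ᵥ u b = if a = b then 1 else 0) (c d : ι → ℝ) :
    (∑ a ∈ s, c a • u a) ⬝ᵥ (∑ b ∈ s, d b • u b) = ∑ a ∈ s, c a * d a := by
  rw [dotProduct_sum']
  refine Finset.sum_congr rfl fun b hb => ?_
  rw [dotProduct_comm, dotProduct_sum']
  calc ∑ a ∈ s, (d b • u b) ⬝ᵥ (c a • u a)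
      = ∑ a ∈ s, if b = a then c a * d b else 0 := by
        refine Finset.sum_congr rfl fun a ha => ?_
        rw [smul_dotProduct, dotProduct_smul, horth b hb a ha]
        split <;> simp [smul_eq_mul] <;> ring
    _ = c b * d b := by rw [Finset.sum_ite_eq s b fun a => c a * d b, if_pos hb]

private lemma ortho_dot_self {n : ℕ} {ι : Type*} [DecidableEq ι] (s : Finset ι)
    (u : ι → Fin n → ℝ)
    (horth : ∀ a ∈ s, ∀ b ∈ s, u a ⬝ᵥ u b = if a = b then 1 else 0)
    (w : Fin n → ℝ) (coeff : ι → ℝ) (hw : w = ∑ a ∈ s, coeff a • u a) :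
    ∑ a ∈ s, (u a ⬝ᵥ w) ^ 2 = w ⬝ᵥ w := by
  have hcoef : ∀ b ∈ s, u b ⬝ᵥ w = coeff b := by
    intro b hb
    rw [hw, dotProduct_sum']
    calc ∑ a ∈ s, u b ⬝ᵥ (coeff a • u a)
        = ∑ a ∈ s, if b = a then coeff a else 0 := by
          refine Finset.sum_congr rfl fun a ha => ?_
          rw [dotProduct_smul, horth b hb a ha]
          split <;> simp [smul_eq_mul]
      _ = coeff b := by rw [Finset.sum_ite_eq s b fun a => coeff a, if_pos hb]
  calc ∑ a ∈ s, (u a ⬝ᵥ w) ^ 2 = ∑ a ∈ s, coeff a * coeff a := by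
        refine Finset.sum_congr rfl fun a ha => ?_
        rw [hcoef a ha]; ring
    _ = w ⬝ᵥ w := by rw [hw, dot_sum_ortho s u horth]

private lemma proj_of_ortho {n : ℕ} {ι : Type*} [Fintype ι] [DecidableEq ι]
    (s : Finset ι) (u : ι → Fin n → ℝ)
    (horth : ∀ a ∈ s, ∀ b ∈ s, u a ⬝ᵥ u b = if a = b then 1 else 0) :
    ∃ P : Matrix (Fin n) (Fin n) ℝ, P.IsSymm ∧ P * P = P ∧ P.rank ≤ s.card ∧
      ∀ w : Fin n → ℝ, (P *ᵥ w) ⬝ᵥ (P *ᵥ w) = ∑ a ∈ s, (u a ⬝ᵥ w) ^ 2 := by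
  classical
  set C : Matrix {a // a ∈ s} (Fin n) ℝ := Matrix.of (fun a j => u a j) with hC
  have hCC : C * Cᵀ = 1 := by
    ext a b
    simp only [Matrix.mul_apply, Matrix.transpose_apply, hC, Matrix.of_apply, Matrix.one_apply]
    rw [show (∑ j, u a j * u b j) = u (a : ι) ⬝ᵥ u b from rfl, horth a a.2 b b.2]
    simp only [Subtype.ext_iff]
  refine ⟨Cᵀ * C, ?_, ?_, ?_, ?_⟩
  · rw [Matrix.IsSymm, Matrix.transpose_mul, Matrix.transpose_transpose]
  · rw [Matrix.mul_assoc, ← Matrix.mul_assoc C Cᵀ C, hCC, Matrix.one_mul]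
  · exact (Matrix.rank_mul_le_right _ _).trans
      ((Matrix.rank_le_card_height C).trans_eq (Fintype.card_coe s))
  · intro w
    have hPw : (Cᵀ * C) *ᵥ w = ∑ a ∈ s, (u a ⬝ᵥ w) • u a := by
      ext i
      rw [← Matrix.mulVec_mulVec]
      simp only [Matrix.mulVec, dotProduct, Matrix.transpose_apply, hC, Matrix.of_apply,
        Finset.sum_apply, Pi.smul_apply, smul_eq_mul]
      rw [← Finset.sum_coe_sort s (fun a => (∑ j, u a j * w j) * u a i)]
      exact Finset.sum_congr rfl fun a _ => by ring
    rw [hPw, dot_sum_ortho s u horth]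
    exact Finset.sum_congr rfl fun a _ => (sq (u a ⬝ᵥ w)).symm


private lemma topk {n k : ℕ} (hnk : n ≤ k ^ 2) (lam : Fin n → ℝ) (hnn : ∀ i, 0 ≤ lam i) :
    ∃ K : Finset (Fin n), K.card = min k n ∧
      Real.sqrt (∑ i, lam i ^ 2) ≤ ∑ i ∈ K, lam i := by
  classical
  have hcard : min k n ≤ (Finset.univ : Finset (Fin n)).card := by
    simp [min_le_right]
  obtain ⟨K, hKmem, hKmax⟩ := Finset.exists_max_image
      (Finset.univ.powersetCard (min k n)) (fun K => ∑ i ∈ K, lam i)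
      (Finset.powersetCard_nonempty.2 hcard)
  have hKcard : K.card = min k n := (Finset.mem_powersetCard.1 hKmem).2
  have hswap : ∀ j, j ∉ K → ∀ i ∈ K, lam j ≤ lam i := by
    intro j hj i hi
    have hKpos : 0 < K.card := Finset.card_pos.2 ⟨i, hi⟩
    have hK' : insert j (K.erase i) ∈ Finset.univ.powersetCard (min k n) := by
      rw [Finset.mem_powersetCard]
      refine ⟨fun y _ => Finset.mem_univ y, ?_⟩
      rw [Finset.card_insert_of_notMem (fun h => hj (Finset.mem_of_mem_erase h)),
        Finset.card_erase_of_mem hi]; omega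
    have hle := hKmax _ hK'
    rw [Finset.sum_insert (fun h => hj (Finset.mem_of_mem_erase h)),
      Finset.sum_erase_eq_sub hi] at hle
    linarith
  refine ⟨K, hKcard, ?_⟩
  have hKnn : 0 ≤ ∑ i ∈ K, lam i := Finset.sum_nonneg fun i _ => hnn i
  have hsq : ∑ i, lam i ^ 2 ≤ (∑ i ∈ K, lam i) ^ 2 := by
    have hsplit : ∑ i ∈ K, lam i ^ 2 + ∑ i ∈ Kᶜ, lam i ^ 2 = ∑ i, lam i ^ 2 :=
      Finset.sum_add_sum_compl K _
    have hKsq : (∑ i ∈ K, lam i) ^ 2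
        = ∑ i ∈ K, lam i ^ 2 + ∑ i ∈ K, ∑ j ∈ K.erase i, lam i * lam j := by
      rw [sq, Finset.sum_mul_sum, ← Finset.sum_add_distrib]
      refine Finset.sum_congr rfl fun i hi => ?_
      rw [← Finset.add_sum_erase K (fun j => lam i * lam j) hi, sq]
    have hcross : ∑ j ∈ Kᶜ, lam j ^ 2 ≤ ∑ i ∈ K, ∑ j ∈ K.erase i, lam i * lam j := by
      rcases Finset.eq_empty_or_nonempty Kᶜ with hKc | hKc
      · rw [hKc, Finset.sum_empty]
        exact Finset.sum_nonneg fun i _ => Finset.sum_nonneg fun j _ =>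
          mul_nonneg (hnn i) (hnn j)
      · have hKne : K ≠ Finset.univ := by
          intro h
          rw [h, Finset.compl_univ] at hKc
          exact Finset.not_nonempty_empty hKc
        have hkn : k < n := by
          rcases lt_or_ge k n with h | h
          · exact h
          · exact absurd (Finset.eq_univ_of_card K
              (by rw [hKcard, min_eq_right h, Fintype.card_fin])) hKne
        have hKcard' : K.card = k := by rw [hKcard, min_eq_left hkn.le]
        have hk2 : 2 ≤ k := by nlinarith [hkn.trans_le hnk]
        obtain ⟨i₀, hi₀, hmin⟩ := K.exists_min_image lam
          (Finset.card_pos.1 (by rw [hKcard']; omega))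
        have h1 : ∑ j ∈ Kᶜ, lam j ^ 2 ≤ ((n - k : ℕ) : ℝ) * lam i₀ ^ 2 := by
          calc ∑ j ∈ Kᶜ, lam j ^ 2 ≤ ∑ _j ∈ Kᶜ, lam i₀ ^ 2 :=
                Finset.sum_le_sum fun j hj =>
                  pow_le_pow_left₀ (hnn j) (hswap j (Finset.mem_compl.1 hj) i₀ hi₀) 2
            _ = ((n - k : ℕ) : ℝ) * lam i₀ ^ 2 := by
                rw [Finset.sum_const, Finset.card_compl, Fintype.card_fin, hKcard',
                  nsmul_eq_mul]
        have h2 : ((k : ℕ) : ℝ) * ((k - 1 : ℕ) : ℝ) * lam i₀ ^ 2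
            ≤ ∑ i ∈ K, ∑ j ∈ K.erase i, lam i * lam j := by
          calc ((k : ℕ) : ℝ) * ((k - 1 : ℕ) : ℝ) * lam i₀ ^ 2
              = ∑ i ∈ K, ∑ _j ∈ K.erase i, lam i₀ * lam i₀ := by
                rw [Finset.sum_congr rfl fun i hi => Finset.sum_const _]
                simp only [Finset.card_erase_of_mem, nsmul_eq_mul]
                rw [Finset.sum_congr rfl fun i hi => by
                  rw [Finset.card_erase_of_mem hi, hKcard'], Finset.sum_const, hKcard',
                  nsmul_eq_mul]
                ring
            _ ≤ ∑ i ∈ K, ∑ j ∈ K.erase i, lam i * lam j := by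
                refine Finset.sum_le_sum fun i hi => Finset.sum_le_sum fun j hj => ?_
                exact mul_le_mul (hmin i hi) (hmin j (Finset.mem_of_mem_erase hj))
                  (hnn i₀) (hnn i)
        have h3 : ((n - k : ℕ) : ℝ) ≤ ((k : ℕ) : ℝ) * ((k - 1 : ℕ) : ℝ) := by
          rw [Nat.cast_sub hkn.le, Nat.cast_sub (by omega : 1 ≤ k)]
          have hn' : (n : ℝ) ≤ (k : ℝ) ^ 2 := by exact_mod_cast hnk
          push_cast
          nlinarith
        calc ∑ j ∈ Kᶜ, lam j ^ 2 ≤ ((n - k : ℕ) : ℝ) * lam i₀ ^ 2 := h1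
          _ ≤ ((k : ℕ) : ℝ) * ((k - 1 : ℕ) : ℝ) * lam i₀ ^ 2 :=
              mul_le_mul_of_nonneg_right h3 (sq_nonneg _)
          _ ≤ _ := h2
    linarith
  calc Real.sqrt (∑ i, lam i ^ 2) ≤ Real.sqrt ((∑ i ∈ K, lam i) ^ 2) :=
        Real.sqrt_le_sqrt hsq
    _ = ∑ i ∈ K, lam i := Real.sqrt_sq hKnn

/-- If μ is a finitely supported distribution on ℝⁿ with mean m and
ε‖m‖² < ‖𝔼 xxᵀ − mmᵀ‖_F, then there is a subspace S (given by an orthogonal projection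
matrix P, i.e. symmetric idempotent) of dimension at most ⌈√n⌉ + 2 with
𝔼 ‖Π_S x‖² ≥ (1 + ε)‖m‖². -/
theorem stmt6 (n : ℕ) {ι : Type*} [Fintype ι]
    (p : ι → ℝ) (x : ι → (Fin n → ℝ))
    (hp : ∀ i, 0 ≤ p i) (hsum : ∑ i, p i = 1)
    (m : Fin n → ℝ) (hm : m = ∑ i, p i • x i)
    (ε : ℝ) (hε : 0 < ε)
    (hgap : ε * (m ⬝ᵥ m) <
      frob ((∑ i, p i • Matrix.vecMulVec (x i) (x i)) - Matrix.vecMulVec m m)) :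
    ∃ P : Matrix (Fin n) (Fin n) ℝ, P.IsSymm ∧ P * P = P ∧
      P.rank ≤ ⌈Real.sqrt n⌉₊ + 2 ∧
      (1 + ε) * (m ⬝ᵥ m) ≤ ∑ i, p i * (P.mulVec (x i) ⬝ᵥ P.mulVec (x i)) := by
  classical
  set A : Matrix (Fin n) (Fin n) ℝ :=
    (∑ i, p i • Matrix.vecMulVec (x i) (x i)) - Matrix.vecMulVec m m with hA
  -- variance identity
  have hmean : ∀ u : Fin n → ℝ, u ⬝ᵥ m = ∑ i, p i * (u ⬝ᵥ x i) := by
    intro u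
    conv_lhs => rw [hm]
    rw [dotProduct_sum']
    exact Finset.sum_congr rfl fun i _ => by rw [dotProduct_smul, smul_eq_mul]
  have hvar : ∀ u : Fin n → ℝ,
      u ⬝ᵥ (A *ᵥ u) = (∑ i, p i * (u ⬝ᵥ x i) ^ 2) - (u ⬝ᵥ m) ^ 2 := by
    intro u
    have hAu : A *ᵥ u = (∑ i, p i • ((x i ⬝ᵥ u) • x i)) - (m ⬝ᵥ u) • m := by
      rw [hA, Matrix.sub_mulVec, sum_mulVec', vecMulVec_mulVec']
      congr 1
      refine Finset.sum_congr rfl fun i _ => ?_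
      rw [Matrix.smul_mulVec, vecMulVec_mulVec']
    rw [hAu, dotProduct_sub, dotProduct_sum', dotProduct_smul, smul_eq_mul]
    rw [dotProduct_comm m u]
    have : ∀ i ∈ Finset.univ, u ⬝ᵥ (p i • ((x i ⬝ᵥ u) • x i)) = p i * (u ⬝ᵥ x i) ^ 2 := by
      intro i _
      rw [dotProduct_smul, dotProduct_smul, smul_eq_mul, smul_eq_mul, dotProduct_comm (x i) u]
      ring
    rw [Finset.sum_congr rfl this]
    ring
  have hvarnn : ∀ u : Fin n → ℝ, 0 ≤ u ⬝ᵥ (A *ᵥ u) := by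
    intro u
    have h0 : 0 ≤ ∑ i, p i * (u ⬝ᵥ x i - u ⬝ᵥ m) ^ 2 :=
      Finset.sum_nonneg fun i _ => mul_nonneg (hp i) (sq_nonneg _)
    have key : ∑ i, p i * (u ⬝ᵥ x i - u ⬝ᵥ m) ^ 2
        = (∑ i, p i * (u ⬝ᵥ x i) ^ 2) - (u ⬝ᵥ m) ^ 2 := by
      have h1 : ∀ i ∈ Finset.univ, p i * (u ⬝ᵥ x i - u ⬝ᵥ m) ^ 2
          = p i * (u ⬝ᵥ x i) ^ 2 - (2 * (u ⬝ᵥ m)) * (p i * (u ⬝ᵥ x i))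
            + (u ⬝ᵥ m) ^ 2 * p i := fun i _ => by ring
      rw [Finset.sum_congr rfl h1, Finset.sum_add_distrib, Finset.sum_sub_distrib,
        ← Finset.mul_sum, ← Finset.mul_sum, ← hmean u, hsum]
      ring
    rw [hvar u]
    linarith
  have hE : ∀ u : Fin n → ℝ,
      ∑ i, p i * (u ⬝ᵥ x i) ^ 2 = (u ⬝ᵥ m) ^ 2 + u ⬝ᵥ (A *ᵥ u) := by
    intro u; rw [hvar u]; ring
  -- A is symmetric / Hermitian / PSD
  have hH : A.IsHermitian := by
    rw [Matrix.IsHermitian]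
    ext i j
    simp only [Matrix.conjTranspose_apply, star_trivial, hA, Matrix.sub_apply,
      Matrix.sum_apply, Matrix.smul_apply, Matrix.vecMulVec_apply, smul_eq_mul]
    have hcomm : (∑ a, p a * (x a j * x a i)) = ∑ a, p a * (x a i * x a j) :=
      Finset.sum_congr rfl fun a _ => by ring
    rw [hcomm, mul_comm (m j) (m i)]
  have hPSD : A.PosSemidef := .of_dotProduct_mulVec_nonneg hH fun w => by rw [star_trivial]; exact hvarnn w
  set lam : Fin n → ℝ := hH.eigenvalues with hlam
  set v : Fin n → Fin n → ℝ := fun j => ⇑(hH.eigenvectorBasis j) with hv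
  have hlnn : ∀ i, 0 ≤ lam i := hPSD.eigenvalues_nonneg
  have hvorth : ∀ i j, v i ⬝ᵥ v j = if i = j then 1 else 0 := by
    intro i j
    have h := hH.eigenvectorBasis.orthonormal
    rw [orthonormal_iff_ite] at h
    have h2 := h i j
    rw [dotProduct_comm]
    simpa [PiLp.inner_apply, RCLike.inner_apply, dotProduct, hv] using h2
  have hAv : ∀ j, A *ᵥ v j = lam j • v j := fun j => hH.mulVec_eigenvectorBasis j
  have hlamval : ∀ j, v j ⬝ᵥ (A *ᵥ v j) = lam j := by
    intro j
    rw [hAv j, dotProduct_smul, smul_eq_mul, hvorth j j, if_pos rfl, mul_one]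
  have hfrob : frob A = Real.sqrt (∑ i, lam i ^ 2) := by
    have hAt : ∀ i j, A j i = A i j := by
      intro i j
      conv_lhs => rw [← hH.eq]
      simp [Matrix.conjTranspose_apply]
    have h1 : ∑ i, ∑ j, A i j ^ 2 = Matrix.trace (A * A) := by
      rw [Matrix.trace]
      simp only [Matrix.diag_apply, Matrix.mul_apply]
      exact Finset.sum_congr rfl fun i _ => Finset.sum_congr rfl fun j _ => by
        rw [hAt i j, pow_two]
    set U : Matrix (Fin n) (Fin n) ℝ := ↑(hH.eigenvectorUnitary) with hUdef
    set D : Matrix (Fin n) (Fin n) ℝ := Matrix.diagonal (RCLike.ofReal ∘ lam) with hD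
    have hUU : star U * U = 1 := Unitary.star_mul_self_of_mem (hH.eigenvectorUnitary).2
    have h2 : Matrix.trace (A * A) = ∑ i, lam i ^ 2 := by
      have hU := hH.spectral_theorem
      rw [Unitary.conjStarAlgAut_apply] at hU
      conv_lhs => rw [hU]
      have h3 : (U * D * star U) * (U * D * star U) = U * (D * D) * star U := by
        calc (U * D * star U) * (U * D * star U)
            = U * D * ((star U * U) * (D * star U)) := by simp only [Matrix.mul_assoc]
          _ = U * (D * D) * star U := by
              rw [hUU, Matrix.one_mul]; simp only [Matrix.mul_assoc]
      rw [h3, Matrix.trace_mul_cycle, hUU, Matrix.one_mul, hD,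
        Matrix.diagonal_mul_diagonal, Matrix.trace_diagonal]
      simp [Function.comp, RCLike.ofReal_real_eq_id, pow_two]
    rw [frob, h1, h2]
  have hk2 : n ≤ (⌈Real.sqrt n⌉₊) ^ 2 := by
    have h1 : Real.sqrt n ≤ (⌈Real.sqrt n⌉₊ : ℝ) := Nat.le_ceil _
    have h0 : (0 : ℝ) ≤ (n : ℝ) := Nat.cast_nonneg n
    have hs := Real.sq_sqrt h0
    have h2 : (n : ℝ) ≤ ((⌈Real.sqrt n⌉₊ : ℕ) : ℝ) ^ 2 := by
      nlinarith [Real.sqrt_nonneg (n : ℝ)]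
    exact_mod_cast h2
  obtain ⟨K, hKcard, hKtop⟩ := topk hk2 lam hlnn
  have hgap2 : ε * (m ⬝ᵥ m) ≤ ∑ i ∈ K, lam i := by
    have h := hgap
    rw [hfrob] at h
    exact (h.trans_le hKtop).le
  set r : Fin n → ℝ := m - ∑ i ∈ K, (v i ⬝ᵥ m) • v i with hr
  have hrdef : m = r + ∑ i ∈ K, (v i ⬝ᵥ m) • v i := by rw [hr]; abel
  by_cases hrz : r = 0
  · obtain ⟨P, hPsymm, hPidem, hPrank, hPdot⟩ := proj_of_ortho K v (fun a _ b _ => hvorth a b)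
    refine ⟨P, hPsymm, hPidem, ?_, ?_⟩
    · exact hPrank.trans (by rw [hKcard]; exact (min_le_left _ _).trans (Nat.le_add_right _ 2))
    · have hmsum : m = ∑ a ∈ K, (v a ⬝ᵥ m) • v a := by
        have h := hrz
        rw [hr, sub_eq_zero] at h
        exact h
      have hself : ∑ a ∈ K, (v a ⬝ᵥ m) ^ 2 = m ⬝ᵥ m :=
        ortho_dot_self K v (fun a _ b _ => hvorth a b) m _ hmsum
      calc (1 + ε) * (m ⬝ᵥ m) = m ⬝ᵥ m + ε * (m ⬝ᵥ m) := by ring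
        _ ≤ (∑ a ∈ K, (v a ⬝ᵥ m) ^ 2) + ∑ a ∈ K, lam a := by
            rw [hself]; exact add_le_add_right hgap2 _
        _ = ∑ a ∈ K, ((v a ⬝ᵥ m) ^ 2 + v a ⬝ᵥ (A *ᵥ v a)) := by
            rw [← Finset.sum_add_distrib]
            exact Finset.sum_congr rfl fun a _ => by rw [hlamval a]
        _ = ∑ a ∈ K, ∑ i, p i * (v a ⬝ᵥ x i) ^ 2 :=
            Finset.sum_congr rfl fun a _ => (hE (v a)).symm
        _ = ∑ i, p i * ((P *ᵥ x i) ⬝ᵥ (P *ᵥ x i)) := by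
            rw [Finset.sum_comm]
            exact Finset.sum_congr rfl fun i _ => by rw [hPdot (x i), Finset.mul_sum]
  · have hnn0 : 0 ≤ r ⬝ᵥ r := Finset.sum_nonneg fun i _ => mul_self_nonneg (r i)
    have hrr : 0 < r ⬝ᵥ r :=
      lt_of_le_of_ne hnn0 (Ne.symm fun h => hrz (dotProduct_self_eq_zero.1 h))
    set d : ℝ := Real.sqrt (r ⬝ᵥ r) with hd
    have hdpos : 0 < d := Real.sqrt_pos.2 hrr
    have hd2 : d * d = r ⬝ᵥ r := Real.mul_self_sqrt hrr.le
    set q : Fin n → ℝ := d⁻¹ • r with hq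
    have hrv : ∀ i ∈ K, v i ⬝ᵥ r = 0 := by
      intro i hi
      rw [hr, dotProduct_sub, dotProduct_sum']
      have hcol : ∀ j ∈ K, v i ⬝ᵥ ((v j ⬝ᵥ m) • v j) = if i = j then v j ⬝ᵥ m else 0 := by
        intro j hj
        rw [dotProduct_smul, smul_eq_mul, hvorth i j]
        split <;> simp
      rw [Finset.sum_congr rfl hcol, Finset.sum_ite_eq K i fun j => v j ⬝ᵥ m, if_pos hi,
        sub_self]
    set u : Option (Fin n) → Fin n → ℝ := fun o => o.elim q v with hu
    set s : Finset (Option (Fin n)) := insert none (K.image some) with hs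
    have hnone : (none : Option (Fin n)) ∉ K.image some := by simp
    have hmem : ∀ o ∈ s, o = none ∨ ∃ i ∈ K, o = some i := by
      intro o ho
      rcases Finset.mem_insert.1 ho with h | h
      · exact Or.inl h
      · obtain ⟨i, hi, hoi⟩ := Finset.mem_image.1 h
        exact Or.inr ⟨i, hi, hoi.symm⟩
    have hqq : q ⬝ᵥ q = 1 := by
      rw [hq, smul_dotProduct, dotProduct_smul, smul_eq_mul, smul_eq_mul, ← hd2]
      field_simp
    have hqv : ∀ i ∈ K, q ⬝ᵥ v i = 0 := by
      intro i hi
      rw [hq, smul_dotProduct, smul_eq_mul, dotProduct_comm, hrv i hi, mul_zero]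
    have horth : ∀ a ∈ s, ∀ b ∈ s, u a ⬝ᵥ u b = if a = b then 1 else 0 := by
      intro a ha b hb
      rcases hmem a ha with rfl | ⟨i, hi, rfl⟩ <;> rcases hmem b hb with rfl | ⟨j, hj, rfl⟩
      · simpa [hu] using hqq
      · simp [hu, hqv j hj]
      · simp [hu, dotProduct_comm (v i) q, hqv i hi]
      · simpa [hu, Option.some.injEq] using hvorth i j
    obtain ⟨P, hPsymm, hPidem, hPrank, hPdot⟩ := proj_of_ortho s u horth
    have hscard : s.card = K.card + 1 := by
      rw [hs, Finset.card_insert_of_notMem hnone,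
        Finset.card_image_of_injective _ (Option.some_injective _)]
    refine ⟨P, hPsymm, hPidem, ?_, ?_⟩
    · refine hPrank.trans ?_
      rw [hscard, hKcard]
      have h := min_le_left (⌈Real.sqrt n⌉₊) n
      omega
    · set coeff : Option (Fin n) → ℝ := fun o => o.elim d (fun i => v i ⬝ᵥ m) with hcf
      have hmsum : m = ∑ a ∈ s, coeff a • u a := by
        rw [hs, Finset.sum_insert hnone,
          Finset.sum_image (fun a _ b _ h => Option.some_injective _ h)]
        simp only [hcf, hu, Option.elim]
        have hdq : d • q = r := by rw [hq, smul_smul, mul_inv_cancel₀ hdpos.ne', one_smul]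
        rw [hdq]
        exact hrdef
      have hself : ∑ a ∈ s, (u a ⬝ᵥ m) ^ 2 = m ⬝ᵥ m := ortho_dot_self s u horth m coeff hmsum
      have hsplit : ∑ a ∈ s, (u a ⬝ᵥ (A *ᵥ u a)) = q ⬝ᵥ (A *ᵥ q) + ∑ i ∈ K, lam i := by
        rw [hs, Finset.sum_insert hnone,
          Finset.sum_image (fun a _ b _ h => Option.some_injective _ h)]
        simp only [hu, Option.elim]
        congr 1
        exact Finset.sum_congr rfl fun i _ => hlamval i
      calc (1 + ε) * (m ⬝ᵥ m) = m ⬝ᵥ m + ε * (m ⬝ᵥ m) := by ring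
        _ ≤ (∑ a ∈ s, (u a ⬝ᵥ m) ^ 2) + ∑ a ∈ s, (u a ⬝ᵥ (A *ᵥ u a)) := by
            rw [hself, hsplit]
            have h0 := hvarnn q
            linarith [hgap2]
        _ = ∑ a ∈ s, ((u a ⬝ᵥ m) ^ 2 + u a ⬝ᵥ (A *ᵥ u a)) := (Finset.sum_add_distrib).symm
        _ = ∑ a ∈ s, ∑ i, p i * (u a ⬝ᵥ x i) ^ 2 :=
            Finset.sum_congr rfl fun a _ => (hE (u a)).symm
        _ = ∑ i, p i * ((P *ᵥ x i) ⬝ᵥ (P *ᵥ x i)) := by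
            rw [Finset.sum_comm]
            exact Finset.sum_congr rfl fun i _ => by rw [hPdot (x i), Finset.mul_sum]
end
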